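/- Let T be a 𝒞-consistent branching tree and ε > 0. Then the relation ⪰_T is a preorder on ⋂𝒞 (i.e. reflexive and transitive), and the relation ≻_{ε,T} is a strict order on ⋂𝒞 (i.e. irreflexive, antisymmetric, and transitive). -/

import Mathlib

open Set

/-- Apply a signed index list (index, sign) to a point, giving the vector
`(sign(i₁)·x_{|i₁|}, …, sign(i_k)·x_{|i_k|})` as a list of reals.
`true` encodes a positive sign, `false` a negative sign. -/
def sigApply {n : ℕ} (σ : List (Fin n × Bool)) (x : Fin n → ℝ) : List ℝ :=
  σ.map (fun p => if p.2 then x p.1 else -(x p.1))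

/-- Strict ε-lexicographic order `x ≻_ε y` on lists of reals:
`x ≠ y` and, at the first index where they differ, `x i ≥ y i + ε`. -/
def lexGt (ε : ℝ) : List ℝ → List ℝ → Prop
  | a :: as, b :: bs => (a = b ∧ lexGt ε as bs) ∨ (a ≠ b ∧ b + ε ≤ a)
  | _, _ => False

/-- A branching tree `T = (V, E, B, σ)`: a finite arborescence (encoded by a
parent map from which every node reaches the root), a branching constraint
`B v ⊆ ℝⁿ` for every node with `B r = ℝⁿ`, and a list `σ v` of signed variable
indices with pairwise distinct absolute values for every node. -/
structure BranchingTree (n : ℕ) where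
  V : Type
  fin : Fintype V
  root : V
  parent : V → Option V
  parent_root : parent root = none
  parent_isSome : ∀ v, v ≠ root → (parent v).isSome
  reach_root : ∀ v, Relation.ReflTransGen (fun a b => parent a = some b) v root
  B : V → Set (Fin n → ℝ)
  B_root : B root = Set.univ
  sig : V → List (Fin n × Bool)
  sig_nodup : ∀ v, ((sig v).map Prod.fst).Nodup

namespace BranchingTree

variable {n : ℕ} (T : BranchingTree n)

/-- The set of children `δ⁺(u)` of a node. -/
def children (u : T.V) : Set T.V := {v | T.parent v = some u}

/-- A leaf is a node without children. -/
def IsLeaf (v : T.V) : Prop := T.children v = ∅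

/-- The nodes on the root-to-`v` path (the ancestors of `v`, including `v`). -/
def pathNodes (v : T.V) : Set T.V :=
  {u | Relation.ReflTransGen (fun a b => T.parent a = some b) v u}

/-- `ℬ_v`: the branching constraints attached to the nodes on the root-to-`v` path. -/
def pathCons (v : T.V) : Set (Set (Fin n → ℝ)) := T.B '' T.pathNodes v

/-- Depth of a node: the number of nodes on its root path. -/
noncomputable def depth (v : T.V) : ℕ := (T.pathNodes v).ncard

/-- The feasible region `⋂(𝒞 ∪ ℬ_v)` of node `v`. -/
def region (𝒞 : Set (Set (Fin n → ℝ))) (v : T.V) : Set (Fin n → ℝ) :=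
  ⋂₀ (𝒞 ∪ T.pathCons v)

/-- `T` is `𝒞`-consistent: (T3) the children of any non-leaf cover `⋂𝒞`;
(T5) `σ u` is a prefix of `σ v` for every child `v` of `u`;
(T6) every entry of `σ v (x)` is bounded above over `x ∈ ⋂𝒞`;
(T7) distinct children of `u` have `σ u`-disjoint branching constraints. -/
def Consistent (𝒞 : Set (Set (Fin n → ℝ))) : Prop :=
  (∀ u : T.V, (T.children u).Nonempty → ⋂₀ 𝒞 ⊆ ⋃ v ∈ T.children u, T.B v) ∧
  (∀ u v : T.V, v ∈ T.children u → T.sig u <+: T.sig v) ∧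
  (∀ v : T.V, ∀ i : Fin (T.sig v).length,
    BddAbove ((fun x => if ((T.sig v).get i).2 then x ((T.sig v).get i).1
      else -(x ((T.sig v).get i).1)) '' ⋂₀ 𝒞)) ∧
  (∀ u v w : T.V, v ∈ T.children u → w ∈ T.children u → v ≠ w →
    sigApply (T.sig u) '' T.B v ∩ sigApply (T.sig u) '' T.B w = ∅)

/-- `v` is a deepest common node `dcn(x,y)`: both `x` and `y` lie in the
feasible region of `v`, and `v` is deepest with this property. -/
def IsDCN (𝒞 : Set (Set (Fin n → ℝ))) (v : T.V) (x y : Fin n → ℝ) : Prop :=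
  x ∈ T.region 𝒞 v ∧ y ∈ T.region 𝒞 v ∧
  ∀ w : T.V, x ∈ T.region 𝒞 w → y ∈ T.region 𝒞 w → T.depth w ≤ T.depth v

/-- `x ⪰_T y` : with `v = dcn(x,y)`, `σ v (x) = σ v (y)` or `σ v (x) ≻_ε σ v (y)`. -/
def TreeGe (𝒞 : Set (Set (Fin n → ℝ))) (ε : ℝ) (x y : Fin n → ℝ) : Prop :=
  ∃ v : T.V, T.IsDCN 𝒞 v x y ∧
    (sigApply (T.sig v) x = sigApply (T.sig v) y ∨
      lexGt ε (sigApply (T.sig v) x) (sigApply (T.sig v) y))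

/-- `x ≻_{ε,T} y` : with `v = dcn(x,y)`, `σ v (x) ≻_ε σ v (y)`. -/
def TreeGt (𝒞 : Set (Set (Fin n → ℝ))) (ε : ℝ) (x y : Fin n → ℝ) : Prop :=
  ∃ v : T.V, T.IsDCN 𝒞 v x y ∧
    lexGt ε (sigApply (T.sig v) x) (sigApply (T.sig v) y)

end BranchingTree

/-- A configuration `(𝒞, 𝒟, g, z, T, ε)`. -/
structure Config (n : ℕ) where
  core : Set (Set (Fin n → ℝ))
  derived : Set (Set (Fin n → ℝ))
  g : (Fin n → ℝ) → ℝ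
  z : WithTop ℝ
  tree : BranchingTree n
  eps : ℝ

/-- `(F, f)`-validity of a configuration: (V1) the tree is core-consistent and
`ε > 0`; (V2) if `z < ∞` there is `x ∈ F` with `f x ≤ z`; (V3) for every real
`ẑ < z`, `F` contains a point of `f`-value `≤ ẑ` iff `⋂𝒞` contains a point of
`g`-value `≤ ẑ`; (V4) every `x ∈ ⋂𝒞` with `g x < z` is dominated by some
`y ∈ ⋂(𝒞 ∪ 𝒟)` with `y ⪰_T x` and `g y ≤ g x`. -/
def Config.Valid {n : ℕ} (F : Set (Fin n → ℝ)) (f : (Fin n → ℝ) → ℝ)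
    (K : Config n) : Prop :=
  (K.tree.Consistent K.core ∧ 0 < K.eps) ∧
  (K.z < ⊤ → ∃ x ∈ F, (f x : WithTop ℝ) ≤ K.z) ∧
  (∀ zh : ℝ, (zh : WithTop ℝ) < K.z →
    ((∃ x ∈ F, f x ≤ zh) ↔ ∃ x ∈ ⋂₀ K.core, K.g x ≤ zh)) ∧
  (∀ x ∈ ⋂₀ K.core, (K.g x : WithTop ℝ) < K.z →
    ∃ y ∈ ⋂₀ (K.core ∪ K.derived), K.tree.TreeGe K.core K.eps y x ∧ K.g y ≤ K.g x)

/-- The implication constraint `[𝒜 ⇝ C] = (ℝⁿ \ ⋂𝒜) ∪ C`. -/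
def implCon {n : ℕ} (𝒜 : Set (Set (Fin n → ℝ))) (C : Set (Fin n → ℝ)) :
    Set (Fin n → ℝ) := (⋂₀ 𝒜)ᶜ ∪ C

section ListAux

theorem lexGt_cons {ε a b : ℝ} {as bs : List ℝ} :
    lexGt ε (a :: as) (b :: bs) ↔
      ((a = b ∧ lexGt ε as bs) ∨ (a ≠ b ∧ b + ε ≤ a)) := Iff.rfl

theorem lexGt_ne {ε : ℝ} : ∀ (a b : List ℝ), lexGt ε a b → a ≠ b := by
  intro a
  induction a with
  | nil => intro b h; cases b <;> simp [lexGt] at h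
  | cons x as ih =>
    intro b h
    cases b with
    | nil => simp [lexGt] at h
    | cons y bs =>
      simp only [lexGt_cons] at h
      rcases h with ⟨rfl, h⟩ | ⟨hxy, _⟩
      · intro he
        exact ih bs h (by injection he)
      · intro he
        exact hxy (by injection he)

theorem lexGt_asymm {ε : ℝ} (hε : 0 < ε) :
    ∀ (a b : List ℝ), lexGt ε a b → lexGt ε b a → False := by
  intro a
  induction a with
  | nil => intro b h; cases b <;> simp [lexGt] at h
  | cons x as ih =>
    intro b h1 h2
    cases b with
    | nil => simp [lexGt] at h1
    | cons y bs =>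
      simp only [lexGt_cons] at h1 h2
      rcases h1 with ⟨rfl, h1⟩ | ⟨hxy, h1⟩ <;> rcases h2 with ⟨hyx, h2⟩ | ⟨hyx, h2⟩
      · exact ih bs h1 h2
      · exact hyx rfl
      · exact hxy hyx.symm
      · linarith

theorem lexGt_trans {ε : ℝ} (hε : 0 < ε) :
    ∀ (a b c : List ℝ), lexGt ε a b → lexGt ε b c → lexGt ε a c := by
  intro a
  induction a with
  | nil => intro b c h1 _; cases b <;> simp [lexGt] at h1
  | cons x as ih =>
    intro b c h1 h2
    cases b with
    | nil => simp [lexGt] at h1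
    | cons y bs =>
      cases c with
      | nil => simp [lexGt] at h2
      | cons w cs =>
        simp only [lexGt_cons] at h1 h2 ⊢
        rcases h1 with ⟨rfl, h1⟩ | ⟨hxy, h1⟩ <;> rcases h2 with ⟨rfl, h2⟩ | ⟨hyw, h2⟩
        · exact Or.inl ⟨rfl, ih bs cs h1 h2⟩
        · exact Or.inr ⟨hyw, h2⟩
        · exact Or.inr ⟨hxy, h1⟩
        · refine Or.inr ⟨?_, by linarith⟩
          intro h; subst h; linarith

theorem lexGt_take {ε : ℝ} :
    ∀ (k : ℕ) (a b : List ℝ), lexGt ε a b →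
      a.take k = b.take k ∨ lexGt ε (a.take k) (b.take k) := by
  intro k
  induction k with
  | zero => intro a b _; exact Or.inl rfl
  | succ k ih =>
    intro a b h
    cases a with
    | nil => cases b <;> simp [lexGt] at h
    | cons x as =>
      cases b with
      | nil => simp [lexGt] at h
      | cons y bs =>
        simp only [List.take_succ_cons]
        simp only [lexGt_cons] at h
        rcases h with ⟨rfl, h⟩ | ⟨hxy, h⟩
        · rcases ih as bs h with he | hg
          · exact Or.inl (by rw [he])
          · exact Or.inr (by exact Or.inl ⟨rfl, hg⟩)
        · exact Or.inr (by exact Or.inr ⟨hxy, h⟩)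

theorem lexGt_of_take {ε : ℝ} :
    ∀ (k : ℕ) (a b : List ℝ), lexGt ε (a.take k) (b.take k) → lexGt ε a b := by
  intro k
  induction k with
  | zero => intro a b h; simp [lexGt] at h
  | succ k ih =>
    intro a b h
    cases a with
    | nil => simp [lexGt] at h
    | cons x as =>
      cases b with
      | nil => simp [lexGt] at h
      | cons y bs =>
        simp only [List.take_succ_cons, lexGt] at h
        simp only [lexGt_cons]
        rcases h with ⟨rfl, h⟩ | ⟨hxy, h⟩
        · exact Or.inl ⟨rfl, ih as bs h⟩
        · exact Or.inr ⟨hxy, h⟩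

end ListAux

namespace BranchingTree

variable {n : ℕ} {T : BranchingTree n} {𝒞 : Set (Set (Fin n → ℝ))}

/-- `v` reaches `u` going upward via parents. -/
def Reaches (T : BranchingTree n) (v u : T.V) : Prop :=
  Relation.ReflTransGen (fun a b => T.parent a = some b) v u

lemma reaches_refl (v : T.V) : T.Reaches v v := Relation.ReflTransGen.refl

lemma mem_pathNodes_iff {v u : T.V} : u ∈ T.pathNodes v ↔ T.Reaches v u := Iff.rfl

lemma eq_root_of_root_reaches {u : T.V} (h : T.Reaches T.root u) : u = T.root := by
  rcases h.cases_head with h | ⟨c, hc, _⟩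
  · exact h.symm
  · rw [T.parent_root] at hc; cases hc

lemma no_self_parent (u : T.V) : T.parent u ≠ some u := by
  have h := T.reach_root u
  induction h using Relation.ReflTransGen.head_induction_on with
  | refl => simp [T.parent_root]
  | head hstep _ ih =>
    rename_i a c _
    intro he
    rw [he] at hstep
    injection hstep with h'
    exact ih (h' ▸ he)

lemma reaches_antisymm {u v : T.V} (h1 : T.Reaches u v) (h2 : T.Reaches v u) : u = v := by
  have key : ∀ a : T.V, T.Reaches a T.root →
      ∀ w, T.Reaches a w → T.Reaches w a → a = w := by
    intro a ha
    induction ha using Relation.ReflTransGen.head_induction_on with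
    | refl => intro w hw _; exact (eq_root_of_root_reaches hw).symm
    | head hstep _ ih =>
      rename_i a c _
      intro w hw hw'
      rcases hw.cases_head with h | ⟨d, hd, hdw⟩
      · exact h
      · rw [hstep] at hd
        injection hd with hd; subst hd
        have hcw : c = w := ih w hdw (hw'.tail hstep)
        have hca : c = a :=
          ih a (by rw [hcw]; exact hw') (Relation.ReflTransGen.single hstep)
        rw [← hca, hcw]
  exact key u (T.reach_root u) v h1 h2

lemma reaches_total {a b c : T.V} (h1 : T.Reaches a b) (h2 : T.Reaches a c) :
    T.Reaches b c ∨ T.Reaches c b := by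
  induction h1 with
  | refl => exact Or.inl h2
  | tail hab' hstep ih =>
    rcases ih with h | h
    · rcases h.cases_head with h | ⟨d, hd, hdc⟩
      · exact Or.inr (h ▸ Relation.ReflTransGen.single hstep)
      · rw [hstep] at hd
        injection hd with hd; subst hd
        exact Or.inl hdc
    · exact Or.inr (h.tail hstep)

lemma pathNodes_mono {v u : T.V} (h : T.Reaches v u) : T.pathNodes u ⊆ T.pathNodes v :=
  fun _ hw => h.trans hw

lemma region_mono {v u : T.V} (h : T.Reaches v u) : T.region 𝒞 v ⊆ T.region 𝒞 u :=
  Set.sInter_subset_sInter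
    (Set.union_subset_union subset_rfl (Set.image_mono (pathNodes_mono h)))

lemma region_subset_sInter (v : T.V) : T.region 𝒞 v ⊆ ⋂₀ 𝒞 :=
  Set.sInter_subset_sInter Set.subset_union_left

lemma region_subset_B (v : T.V) : T.region 𝒞 v ⊆ T.B v := fun x hx =>
  hx (T.B v) (Or.inr ⟨v, reaches_refl v, rfl⟩)

lemma mem_region_root {x : Fin n → ℝ} (hx : x ∈ ⋂₀ 𝒞) : x ∈ T.region 𝒞 T.root := by
  intro S hS
  rcases hS with hS | ⟨u, hu, rfl⟩
  · exact hx S hS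
  · rw [eq_root_of_root_reaches hu, T.B_root]; trivial

lemma depth_lt {c u : T.V} (h : T.Reaches c u) (hne : c ≠ u) : T.depth u < T.depth c := by
  haveI := T.fin
  apply Set.ncard_lt_ncard _ (Set.toFinite _)
  constructor
  · exact pathNodes_mono h
  · intro hsub
    exact hne (reaches_antisymm h (hsub (reaches_refl c)))

lemma reaches_of_depth_le {u w : T.V} (hcomp : T.Reaches u w ∨ T.Reaches w u)
    (hd : T.depth u ≤ T.depth w) : T.Reaches w u := by
  rcases hcomp with h | h
  · rcases eq_or_ne u w with rfl | hne
    · exact h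
    · exact absurd hd (not_le.mpr (depth_lt h hne))
  · exact h

lemma region_comparable (hT : T.Consistent 𝒞) {x : Fin n → ℝ} {v w : T.V}
    (hv : x ∈ T.region 𝒞 v) (hw : x ∈ T.region 𝒞 w) :
    T.Reaches v w ∨ T.Reaches w v := by
  haveI := T.fin
  set A : Set T.V := T.pathNodes v ∩ T.pathNodes w with hA
  have hroot : T.root ∈ A := ⟨T.reach_root v, T.reach_root w⟩
  obtain ⟨u, hu, hmax⟩ := Set.Finite.exists_maximalFor T.depth A (Set.toFinite A)
    ⟨T.root, hroot⟩
  rcases eq_or_ne u v with rfl | huv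
  · exact Or.inr hu.2
  rcases eq_or_ne u w with rfl | huw
  · exact Or.inl hu.1
  rcases hu.1.cases_tail with h | ⟨cv, hcv, hcvu⟩
  · exact absurd h huv
  rcases hu.2.cases_tail with h | ⟨cw, hcw, hcwu⟩
  · exact absurd h huw
  rcases eq_or_ne cv cw with rfl | hne
  · -- cv ∈ A deeper than u, contradiction with maximality
    exfalso
    have hcvA : cv ∈ A := ⟨hcv, hcw⟩
    have hcvu' : cv ≠ u := by
      intro h; rw [h] at hcvu; exact no_self_parent u hcvu
    have : T.depth u < T.depth cv :=
      depth_lt (Relation.ReflTransGen.single hcvu) hcvu'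
    exact absurd (hmax hcvA this.le) (not_le.mpr this)
  · exfalso
    have h7 := hT.2.2.2 u cv cw hcvu hcwu hne
    have hxv : x ∈ T.B cv := region_subset_B cv (region_mono hcv hv)
    have hxw : x ∈ T.B cw := region_subset_B cw (region_mono hcw hw)
    have : sigApply (T.sig u) x ∈
        sigApply (T.sig u) '' T.B cv ∩ sigApply (T.sig u) '' T.B cw :=
      ⟨⟨x, hxv, rfl⟩, ⟨x, hxw, rfl⟩⟩
    rw [h7] at this
    exact this

lemma sig_prefix (hT : T.Consistent 𝒞) {v u : T.V} (h : T.Reaches v u) :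
    T.sig u <+: T.sig v := by
  induction h using Relation.ReflTransGen.head_induction_on with
  | refl => exact List.prefix_refl _
  | head hstep _ ih =>
    rename_i a c _
    exact ih.trans (hT.2.1 c a hstep)

lemma sigApply_eq_take (hT : T.Consistent 𝒞) {v u : T.V} (h : T.Reaches v u)
    (x : Fin n → ℝ) :
    sigApply (T.sig u) x = (sigApply (T.sig v) x).take (T.sig u).length := by
  have hpre : sigApply (T.sig u) x <+: sigApply (T.sig v) x :=
    (sig_prefix hT h).map _
  rw [List.prefix_iff_eq_take.mp hpre]
  simp [sigApply]

/-- Restriction of the (eq or ≻) relation from a descendant node to an ancestor. -/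
lemma restrict_rel (hT : T.Consistent 𝒞) {ε : ℝ} {v u : T.V} (h : T.Reaches v u)
    {p q : Fin n → ℝ}
    (hpq : sigApply (T.sig v) p = sigApply (T.sig v) q ∨
      lexGt ε (sigApply (T.sig v) p) (sigApply (T.sig v) q)) :
    sigApply (T.sig u) p = sigApply (T.sig u) q ∨
      lexGt ε (sigApply (T.sig u) p) (sigApply (T.sig u) q) := by
  rw [sigApply_eq_take hT h p, sigApply_eq_take hT h q]
  rcases hpq with he | hg
  · exact Or.inl (by rw [he])
  · exact lexGt_take _ _ _ hg

lemma mem_region_of_child {c u : T.V} (hc : T.parent c = some u) {x : Fin n → ℝ}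
    (hxu : x ∈ T.region 𝒞 u) (hxB : x ∈ T.B c) : x ∈ T.region 𝒞 c := by
  intro S hS
  rcases hS with hS | ⟨w, hw, rfl⟩
  · exact hxu S (Or.inl hS)
  · rcases hw.cases_head with h | ⟨d, hd, hdw⟩
    · rw [← h]; exact hxB
    · rw [hc] at hd
      injection hd with hd; subst hd
      exact hxu (T.B w) (Or.inr ⟨w, hdw, rfl⟩)

/-- Descent lemma: a point of `⋂𝒞` whose `σ_u`-image agrees with a point of
`B c` for a child `c` of `u` must itself lie in `B c`. -/
lemma mem_B_of_sigApply_eq (hT : T.Consistent 𝒞) {u c : T.V} (hc : T.parent c = some u)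
    {x y : Fin n → ℝ} (hx : x ∈ ⋂₀ 𝒞) (hy : y ∈ T.B c)
    (heq : sigApply (T.sig u) x = sigApply (T.sig u) y) : x ∈ T.B c := by
  have hcov := hT.1 u ⟨c, hc⟩ hx
  simp only [Set.mem_iUnion] at hcov
  obtain ⟨c', hc', hxc'⟩ := hcov
  rcases eq_or_ne c' c with rfl | hne
  · exact hxc'
  · exfalso
    have h7 := hT.2.2.2 u c' c hc' hc hne
    have : sigApply (T.sig u) x ∈
        sigApply (T.sig u) '' T.B c' ∩ sigApply (T.sig u) '' T.B c :=
      ⟨⟨x, hxc', rfl⟩, heq ▸ ⟨y, hy, rfl⟩⟩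
    rw [h7] at this
    exact this

lemma dcn_exists (hT : T.Consistent 𝒞) {x y : Fin n → ℝ} (hx : x ∈ ⋂₀ 𝒞)
    (hy : y ∈ ⋂₀ 𝒞) : ∃ v : T.V, T.IsDCN 𝒞 v x y := by
  haveI := T.fin
  set A : Set T.V := {v | x ∈ T.region 𝒞 v ∧ y ∈ T.region 𝒞 v} with hA
  have hroot : T.root ∈ A := ⟨mem_region_root hx, mem_region_root hy⟩
  obtain ⟨u, hu, hmax⟩ := Set.Finite.exists_maximalFor T.depth A (Set.toFinite A)
    ⟨T.root, hroot⟩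
  refine ⟨u, hu.1, hu.2, ?_⟩
  intro w hw1 hw2
  by_contra hlt
  push_neg at hlt
  exact absurd (hmax ⟨hw1, hw2⟩ hlt.le) (not_le.mpr hlt)

lemma dcn_unique (hT : T.Consistent 𝒞) {x y : Fin n → ℝ} {v w : T.V}
    (hv : T.IsDCN 𝒞 v x y) (hw : T.IsDCN 𝒞 w x y) : v = w := by
  have hd : T.depth v = T.depth w :=
    le_antisymm (hw.2.2 v hv.1 hv.2.1) (hv.2.2 w hw.1 hw.2.1)
  rcases region_comparable hT hv.1 hw.1 with h | h
  · rcases eq_or_ne v w with rfl | hne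
    · rfl
    · exact absurd hd (depth_lt h hne).ne'
  · rcases eq_or_ne w v with rfl | hne
    · rfl
    · exact absurd hd.symm (depth_lt h hne).ne'

lemma isDCN_symm {v : T.V} {x y : Fin n → ℝ} (h : T.IsDCN 𝒞 v x y) :
    T.IsDCN 𝒞 v y x :=
  ⟨h.2.1, h.1, fun w h1 h2 => h.2.2 w h2 h1⟩

/-- Key maximality transfer: if `u = dcn(a,b)` with `σ_u(a) = σ_u(b)` and one of
`a, b` lies in `{x, z} ⊆ region u`, then `u` is also a dcn of `(z, x)`. -/
lemma isDCN_transfer (hT : T.Consistent 𝒞) {u : T.V} {a b x z : Fin n → ℝ}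
    (hdcn : T.IsDCN 𝒞 u a b)
    (heq : sigApply (T.sig u) a = sigApply (T.sig u) b)
    (hx : x ∈ T.region 𝒞 u) (hz : z ∈ T.region 𝒞 u)
    (hmem : a = x ∨ a = z ∨ b = x ∨ b = z) : T.IsDCN 𝒞 u z x := by
  refine ⟨hz, hx, ?_⟩
  intro w hzw hxw
  by_contra hlt
  push_neg at hlt
  have hcomp := region_comparable hT hx hxw
  have hr : T.Reaches w u := reaches_of_depth_le hcomp hlt.le
  have hwu : w ≠ u := by rintro rfl; exact absurd le_rfl (not_le.mpr hlt)
  rcases hr.cases_tail with h | ⟨c', hc', hcu⟩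
  · exact hwu h.symm
  -- the child of u on the path, i.e. last step: Reaches w c' and parent c' = some u. Good.
  have hxc : x ∈ T.B c' := region_subset_B c' (region_mono hc' hxw)
  have hzc : z ∈ T.B c' := region_subset_B c' (region_mono hc' hzw)
  have hab : a ∈ T.B c' ∧ b ∈ T.B c' := by
    have ha𝒞 : a ∈ ⋂₀ 𝒞 := region_subset_sInter u hdcn.1
    have hb𝒞 : b ∈ ⋂₀ 𝒞 := region_subset_sInter u hdcn.2.1
    rcases hmem with rfl | rfl | rfl | rfl
    · exact ⟨hxc, mem_B_of_sigApply_eq hT hcu hb𝒞 hxc heq.symm⟩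
    · exact ⟨hzc, mem_B_of_sigApply_eq hT hcu hb𝒞 hzc heq.symm⟩
    · exact ⟨mem_B_of_sigApply_eq hT hcu ha𝒞 hxc heq, hxc⟩
    · exact ⟨mem_B_of_sigApply_eq hT hcu ha𝒞 hzc heq, hzc⟩
  have hac : a ∈ T.region 𝒞 c' := mem_region_of_child hcu hdcn.1 hab.1
  have hbc : b ∈ T.region 𝒞 c' := mem_region_of_child hcu hdcn.2.1 hab.2
  have hle := hdcn.2.2 c' hac hbc
  have hcu' : c' ≠ u := by
    intro h; rw [h] at hcu; exact no_self_parent u hcu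
  exact absurd hle (not_le.mpr (depth_lt (Relation.ReflTransGen.single hcu) hcu'))

/-- Strict lift: a strict comparison at any common node yields `TreeGt`. -/
lemma treeGt_of_lexGt_at (hT : T.Consistent 𝒞) {ε : ℝ} {u : T.V} {x z : Fin n → ℝ}
    (hx : x ∈ T.region 𝒞 u) (hz : z ∈ T.region 𝒞 u)
    (hgt : lexGt ε (sigApply (T.sig u) z) (sigApply (T.sig u) x)) :
    T.TreeGt 𝒞 ε z x := by
  obtain ⟨w, hw⟩ := dcn_exists hT (region_subset_sInter u hz) (region_subset_sInter u hx)
  refine ⟨w, hw, ?_⟩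
  have hdep : T.depth u ≤ T.depth w := hw.2.2 u hz hx
  have hcomp := region_comparable hT hz hw.1
  have hr : T.Reaches w u := reaches_of_depth_le hcomp hdep
  rw [sigApply_eq_take hT hr z, sigApply_eq_take hT hr x] at hgt
  exact lexGt_of_take _ _ _ hgt

/-- Master transitivity step at a common node `u`. -/
lemma treeGe_master (hT : T.Consistent 𝒞) {ε : ℝ} (hε : 0 < ε) {u : T.V}
    {x y z : Fin n → ℝ}
    (hxu : x ∈ T.region 𝒞 u) (hzu : z ∈ T.region 𝒞 u)
    (h1 : sigApply (T.sig u) y = sigApply (T.sig u) x ∨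
      lexGt ε (sigApply (T.sig u) y) (sigApply (T.sig u) x))
    (h2 : sigApply (T.sig u) z = sigApply (T.sig u) y ∨
      lexGt ε (sigApply (T.sig u) z) (sigApply (T.sig u) y))
    (hdcn : T.IsDCN 𝒞 u y x ∨ T.IsDCN 𝒞 u z y) :
    T.TreeGe 𝒞 ε z x := by
  rcases h1 with he1 | hg1
  · rcases h2 with he2 | hg2
    · -- all equal
      have hzx : sigApply (T.sig u) z = sigApply (T.sig u) x := he2.trans he1
      rcases hdcn with hd | hd
      · exact ⟨u, isDCN_transfer hT hd he1 hxu hzu (Or.inr (Or.inr (Or.inl rfl))), Or.inl hzx⟩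
      · exact ⟨u, isDCN_transfer hT hd he2 hxu hzu (Or.inr (Or.inl rfl)), Or.inl hzx⟩
    · have : lexGt ε (sigApply (T.sig u) z) (sigApply (T.sig u) x) := he1 ▸ hg2
      obtain ⟨w, hw, hg⟩ := treeGt_of_lexGt_at hT hxu hzu this
      exact ⟨w, hw, Or.inr hg⟩
  · have hg : lexGt ε (sigApply (T.sig u) z) (sigApply (T.sig u) x) := by
      rcases h2 with he2 | hg2
      · rw [he2]; exact hg1
      · exact lexGt_trans hε _ _ _ hg2 hg1
    obtain ⟨w, hw, hg'⟩ := treeGt_of_lexGt_at hT hxu hzu hg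
    exact ⟨w, hw, Or.inr hg'⟩

end BranchingTree


/-- for a `𝒞`-consistent branching tree `T` and `ε > 0`, the
relation `⪰_T` is a preorder (reflexive and transitive) on `⋂𝒞`, and `≻_{ε,T}`
is a strict order (irreflexive, antisymmetric, transitive) on `⋂𝒞`. -/
theorem treeGe_preorder_treeGt_strictOrder {n : ℕ} (𝒞 : Set (Set (Fin n → ℝ)))
    (T : BranchingTree n) (ε : ℝ) (hT : T.Consistent 𝒞) (hε : 0 < ε) :
    (∀ x ∈ ⋂₀ 𝒞, T.TreeGe 𝒞 ε x x) ∧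
    (∀ x ∈ ⋂₀ 𝒞, ∀ y ∈ ⋂₀ 𝒞, ∀ z ∈ ⋂₀ 𝒞,
      T.TreeGe 𝒞 ε y x → T.TreeGe 𝒞 ε z y → T.TreeGe 𝒞 ε z x) ∧
    (∀ x ∈ ⋂₀ 𝒞, ¬ T.TreeGt 𝒞 ε x x) ∧
    (∀ x ∈ ⋂₀ 𝒞, ∀ y ∈ ⋂₀ 𝒞, T.TreeGt 𝒞 ε x y → ¬ T.TreeGt 𝒞 ε y x) ∧
    (∀ x ∈ ⋂₀ 𝒞, ∀ y ∈ ⋂₀ 𝒞, ∀ z ∈ ⋂₀ 𝒞,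
      T.TreeGt 𝒞 ε y x → T.TreeGt 𝒞 ε z y → T.TreeGt 𝒞 ε z x) := by

  constructor
  · intro x hx
    obtain ⟨v, hv⟩ := BranchingTree.dcn_exists hT hx hx
    exact ⟨v, hv, Or.inl rfl⟩
  constructor
  · rintro x hx y hy z hz ⟨u1, hd1, h1⟩ ⟨u2, hd2, h2⟩
    rcases BranchingTree.region_comparable hT hd1.1 hd2.2.1 with hr | hr
    · refine BranchingTree.treeGe_master hT hε (u := u2)
        (BranchingTree.region_mono hr hd1.2.1) hd2.1
        (BranchingTree.restrict_rel hT hr h1) h2 (Or.inr hd2)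
    · refine BranchingTree.treeGe_master hT hε (u := u1)
        hd1.2.1 (BranchingTree.region_mono hr hd2.1)
        h1 (BranchingTree.restrict_rel hT hr h2) (Or.inl hd1)
  constructor
  · rintro x hx ⟨v, hv, hgt⟩
    exact lexGt_ne _ _ hgt rfl
  constructor
  · rintro x hx y hy ⟨u, hu, hgt1⟩ ⟨w, hw, hgt2⟩
    have : u = w := BranchingTree.dcn_unique hT hu (BranchingTree.isDCN_symm hw)
    subst this
    exact lexGt_asymm hε _ _ hgt1 hgt2
  · rintro x hx y hy z hz ⟨u1, hd1, h1⟩ ⟨u2, hd2, h2⟩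
    rcases BranchingTree.region_comparable hT hd1.1 hd2.2.1 with hr | hr
    · have h1' := BranchingTree.restrict_rel hT hr (Or.inr h1)
      have hg : lexGt ε (sigApply (T.sig u2) z) (sigApply (T.sig u2) x) := by
        rcases h1' with he | hg
        · rw [← he]; exact h2
        · exact lexGt_trans hε _ _ _ h2 hg
      exact BranchingTree.treeGt_of_lexGt_at hT
        (BranchingTree.region_mono hr hd1.2.1) hd2.1 hg
    · have h2' := BranchingTree.restrict_rel hT hr (Or.inr h2)
      have hg : lexGt ε (sigApply (T.sig u1) z) (sigApply (T.sig u1) x) := by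
        rcases h2' with he | hg
        · rw [he]; exact h1
        · exact lexGt_trans hε _ _ _ hg h1
      exact BranchingTree.treeGt_of_lexGt_at hT
        hd1.2.1 (BranchingTree.region_mono hr hd2.1) hg
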